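/- Tangential components of the normal variation: Let ψ, v : ℝ² → ℝ³ be differentiable at x ∈ ℝ² with ∂₁ψ(x) × ∂₂ψ(x) ≠ 0, and let δn denote the derivative at t = 0 of the map t ↦ n[ψ + t v](x). Then δn · n[ψ](x) = 0, and for k = 1, 2: δn · ∂ₖψ(x) = −n[ψ](x) · ∂ₖv(x). -/

import Mathlib

open Matrix MeasureTheory

noncomputable section

/-- `i`-th partial derivative of `ψ : ℝ² → ℝ³` at `x`. -/
def pd (ψ : (Fin 2 → ℝ) → (Fin 3 → ℝ)) (i : Fin 2) (x : Fin 2 → ℝ) : Fin 3 → ℝ :=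
  fderiv ℝ ψ x (Pi.single i 1)

/-- Jacobian matrix `∇ψ(x) ∈ ℝ^{3×2}`. -/
def jac (ψ : (Fin 2 → ℝ) → (Fin 3 → ℝ)) (x : Fin 2 → ℝ) : Matrix (Fin 3) (Fin 2) ℝ :=
  Matrix.of fun m i => pd ψ i x m

/-- First fundamental form `g[ψ](x) = (∇ψ(x))ᵀ ∇ψ(x)`. -/
def met (ψ : (Fin 2 → ℝ) → (Fin 3 → ℝ)) (x : Fin 2 → ℝ) : Matrix (Fin 2) (Fin 2) ℝ :=
  (jac ψ x)ᵀ * jac ψ x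

/-- Euclidean inner product on `ℝ³`. -/
def dot3 (u v : Fin 3 → ℝ) : ℝ := ∑ m, u m * v m

/-- Euclidean norm on `ℝ³`. -/
def norm3 (u : Fin 3 → ℝ) : ℝ := Real.sqrt (dot3 u u)

/-- Cross product `∂₁ψ(x) × ∂₂ψ(x)`. -/
def crossPsi (ψ : (Fin 2 → ℝ) → (Fin 3 → ℝ)) (x : Fin 2 → ℝ) : Fin 3 → ℝ :=
  crossProduct (pd ψ 0 x) (pd ψ 1 x)

/-- Unit normal `n[ψ](x)`. -/
def nrm (ψ : (Fin 2 → ℝ) → (Fin 3 → ℝ)) (x : Fin 2 → ℝ) : Fin 3 → ℝ :=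
  (norm3 (crossPsi ψ x))⁻¹ • crossPsi ψ x

/-- Second partial derivative `∂ᵢ∂ⱼψ(x)`. -/
def pd2 (ψ : (Fin 2 → ℝ) → (Fin 3 → ℝ)) (i j : Fin 2) (x : Fin 2 → ℝ) : Fin 3 → ℝ :=
  pd (pd ψ j) i x

/-- Hessian `D²ψᵐ(x)` of the `m`-th component. -/
def hess (ψ : (Fin 2 → ℝ) → (Fin 3 → ℝ)) (m : Fin 3) (x : Fin 2 → ℝ) :
    Matrix (Fin 2) (Fin 2) ℝ :=
  Matrix.of fun i j => pd2 ψ i j x m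

/-- Second fundamental form `II[ψ](x)ᵢⱼ = ∂ᵢ∂ⱼψ(x)·n[ψ](x)`. -/
def sff (ψ : (Fin 2 → ℝ) → (Fin 3 → ℝ)) (x : Fin 2 → ℝ) : Matrix (Fin 2) (Fin 2) ℝ :=
  Matrix.of fun i j => dot3 (pd2 ψ i j x) (nrm ψ x)

/-- Frobenius inner product `A : B`. -/
def frob {n : Type*} [Fintype n] (A B : Matrix n n ℝ) : ℝ := ∑ i, ∑ j, A i j * B i j

/-- Gram–Schmidt frame vector `y¹[ψ](x)`. -/
def y1 (ψ : (Fin 2 → ℝ) → (Fin 3 → ℝ)) (x : Fin 2 → ℝ) : Fin 3 → ℝ :=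
  (norm3 (pd ψ 0 x))⁻¹ • pd ψ 0 x

/-- Gram–Schmidt vector `ŷ²[ψ](x)` (before normalization). -/
def yhat2 (ψ : (Fin 2 → ℝ) → (Fin 3 → ℝ)) (x : Fin 2 → ℝ) : Fin 3 → ℝ :=
  pd ψ 1 x - (dot3 (pd ψ 1 x) (y1 ψ x)) • y1 ψ x

/-- Gram–Schmidt frame vector `y²[ψ](x)`. -/
def y2 (ψ : (Fin 2 → ℝ) → (Fin 3 → ℝ)) (x : Fin 2 → ℝ) : Fin 3 → ℝ :=
  (norm3 (yhat2 ψ x))⁻¹ • yhat2 ψ x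

lemma dot3_nonneg (u : Fin 3 → ℝ) : 0 ≤ dot3 u u :=
  Finset.sum_nonneg fun _ _ => mul_self_nonneg _

lemma dot3_pos {u : Fin 3 → ℝ} (hu : u ≠ 0) : 0 < dot3 u u := by
  rcases (dot3_nonneg u).lt_or_eq with h | h
  · exact h
  · exfalso; apply hu; funext m
    have h1 := (Finset.sum_eq_zero_iff_of_nonneg (fun m _ => mul_self_nonneg (u m))).mp h.symm
    have h2 := h1 m (Finset.mem_univ m)
    simpa using mul_self_eq_zero.mp h2

lemma norm3_pos {u : Fin 3 → ℝ} (hu : u ≠ 0) : 0 < norm3 u :=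
  Real.sqrt_pos.mpr (dot3_pos hu)

lemma dot3_self_eq (u : Fin 3 → ℝ) : dot3 u u = (norm3 u)^2 :=
  (Real.sq_sqrt (dot3_nonneg u)).symm

lemma hasDerivAt_normalized (c d e : Fin 3 → ℝ) (hc : c ≠ 0) :
    HasDerivAt (fun t : ℝ => (norm3 (c + t • d + t^2 • e))⁻¹ • (c + t • d + t^2 • e))
      ((norm3 c)⁻¹ • d - (dot3 c d / (norm3 c)^3) • c) 0 := by
  set s := norm3 c with hs
  have hs0 : 0 < s := norm3_pos hc
  have hne : dot3 c c ≠ 0 := (dot3_pos hc).ne'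
  set P : ℝ → Fin 3 → ℝ := fun t => c + t • d + t^2 • e with hPdef
  have hP0 : P 0 = c := by simp [hPdef]
  have hPm : ∀ m, HasDerivAt (fun t : ℝ => P t m) (d m) 0 := by
    intro m
    have h1 : HasDerivAt (fun t : ℝ => c m + t * d m + t ^ 2 * e m) (d m) 0 := by
      have := (((hasDerivAt_id (0:ℝ)).mul_const (d m)).const_add (c m)).fun_add
        ((hasDerivAt_pow 2 (0:ℝ)).mul_const (e m))
      simpa using this
    simpa [hPdef, smul_eq_mul] using h1
  have hg : HasDerivAt (fun t => dot3 (P t) (P t)) (2 * dot3 c d) 0 := by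
    have h := HasDerivAt.sum (u := Finset.univ)
      (A := fun m t => P t m * P t m) (A' := fun m => d m * P 0 m + P 0 m * d m)
      (fun m _ => (hPm m).mul (hPm m))
    have : (∑ m, (d m * P 0 m + P 0 m * d m)) = 2 * dot3 c d := by
      simp [hP0, dot3, Fin.sum_univ_three]; ring
    rw [this] at h
    exact h
  have hsq : HasDerivAt Real.sqrt (1 / (2 * Real.sqrt (dot3 c c))) (dot3 (P 0) (P 0)) := by
    rw [hP0]; exact Real.hasDerivAt_sqrt hne
  have hsg := hsq.comp 0 hg
  have hfne : Real.sqrt (dot3 (P 0) (P 0)) ≠ 0 := by rw [hP0]; exact hs0.ne'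
  have hinv := hsg.fun_inv hfne
  have hcomp : ∀ m, HasDerivAt
      (fun t : ℝ => (norm3 (c + t • d + t^2 • e))⁻¹ • (c + t • d + t^2 • e) $ m)
      (((s)⁻¹ • d - (dot3 c d / s^3) • c) m) 0 := by
    intro m
    have h := hinv.fun_mul (hPm m)
    have heq : (fun t : ℝ => (norm3 (c + t • d + t^2 • e))⁻¹ • (c + t • d + t^2 • e) $ m)
        = fun t => (Real.sqrt ((fun t => dot3 (P t) (P t)) t))⁻¹ * P t m := by
      funext t; simp [norm3, hPdef, smul_eq_mul]
    rw [heq]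
    simp only [Function.comp, hP0] at h
    rw [show Real.sqrt (dot3 c c) = s from rfl] at h
    convert h using 1
    show s⁻¹ * d m - dot3 c d / s ^ 3 * c m = _
    field_simp
    ring
    all_goals rfl
  exact hasDerivAt_pi.mpr hcomp

/-- Tangential components of the first variation `δn` of the
unit normal: `δn · n[ψ](x) = 0` and `δn · ∂ₖψ(x) = −n[ψ](x) · ∂ₖv(x)`. -/
theorem normal_variation_components
    (ψ v : (Fin 2 → ℝ) → (Fin 3 → ℝ)) (x : Fin 2 → ℝ)
    (hψ : DifferentiableAt ℝ ψ x) (hv : DifferentiableAt ℝ v x)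
    (hc : crossPsi ψ x ≠ 0) :
    dot3 (deriv (fun t : ℝ => nrm (fun y => ψ y + t • v y) x) 0) (nrm ψ x) = 0 ∧
    ∀ k : Fin 2,
      dot3 (deriv (fun t : ℝ => nrm (fun y => ψ y + t • v y) x) 0) (pd ψ k x)
        = -(dot3 (nrm ψ x) (pd v k x)) := by
  set a := pd ψ 0 x with ha
  set b := pd ψ 1 x with hb
  set a' := pd v 0 x with ha'
  set b' := pd v 1 x with hb'
  set c := crossPsi ψ x with hcdef
  set d : Fin 3 → ℝ := crossProduct a b' + crossProduct a' b with hd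
  set e : Fin 3 → ℝ := crossProduct a' b' with he
  set s := norm3 c with hsdef
  have hs0 : 0 < s := norm3_pos hc
  -- partial derivatives of the perturbed map
  have hpd : ∀ (t : ℝ) (i : Fin 2),
      pd (fun y => ψ y + t • v y) i x = pd ψ i x + t • pd v i x := by
    intro t i
    have hfd : fderiv ℝ (fun y => ψ y + t • v y) x
        = fderiv ℝ ψ x + t • fderiv ℝ v x := by
      rw [fderiv_fun_add (g := fun y => t • v y) hψ (hv.const_smul t), fderiv_fun_const_smul hv]
    simp [pd, hfd]
  have hcross : ∀ t : ℝ,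
      crossPsi (fun y => ψ y + t • v y) x = c + t • d + t^2 • e := by
    intro t
    simp only [crossPsi, hpd t 0, hpd t 1, ← ha, ← hb, ← ha', ← hb']
    simp only [map_add, _root_.map_smul, LinearMap.add_apply, LinearMap.smul_apply,
      hcdef, crossPsi, ← ha, ← hb, hd, he]
    rw [sq]
    module
  have hfun : (fun t : ℝ => nrm (fun y => ψ y + t • v y) x)
      = fun t : ℝ => (norm3 (c + t • d + t^2 • e))⁻¹ • (c + t • d + t^2 • e) := by
    funext t; rw [nrm, hcross t]
  have hder := hasDerivAt_normalized c d e hc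
  have hderiv : deriv (fun t : ℝ => nrm (fun y => ψ y + t • v y) x) 0
      = s⁻¹ • d - (dot3 c d / s^3) • c := by
    rw [hfun]; exact hder.deriv
  have hnrm : nrm ψ x = s⁻¹ • c := rfl
  have hcc : dot3 c c = s^2 := dot3_self_eq c
  have hca : dot3 c a = 0 := by
    rw [hcdef]; simp [crossPsi, ← ha, ← hb, dot3, cross_apply, Fin.sum_univ_three]; ring
  have hcb : dot3 c b = 0 := by
    rw [hcdef]; simp [crossPsi, ← ha, ← hb, dot3, cross_apply, Fin.sum_univ_three]; ring
  have hda : dot3 d a = -(dot3 c a') := by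
    rw [hd, hcdef]; simp [crossPsi, ← ha, ← hb, dot3, cross_apply, Fin.sum_univ_three]; ring
  have hdb : dot3 d b = -(dot3 c b') := by
    rw [hd, hcdef]; simp [crossPsi, ← ha, ← hb, dot3, cross_apply, Fin.sum_univ_three]; ring
  have hdc : dot3 d c = dot3 c d := by simp [dot3, mul_comm]
  have expand : ∀ (w : Fin 3 → ℝ),
      dot3 (s⁻¹ • d - (dot3 c d / s^3) • c) w
        = s⁻¹ * dot3 d w - (dot3 c d / s^3) * dot3 c w := by
    intro w
    simp [dot3, Fin.sum_univ_three, smul_eq_mul]; ring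
  have expand2 : ∀ (u w : Fin 3 → ℝ), dot3 u (s⁻¹ • w) = s⁻¹ * dot3 u w := by
    intro u w; simp [dot3, Fin.sum_univ_three, smul_eq_mul]; ring
  constructor
  · rw [hderiv, hnrm, expand2, expand, hdc, hcc]
    field_simp
    ring
  · intro k
    rw [hderiv, hnrm]
    fin_cases k
    · show dot3 _ a = -(dot3 (s⁻¹ • c) a')
      rw [expand, hda, hca,
        show dot3 (s⁻¹ • c) a' = s⁻¹ * dot3 c a' by
          simp [dot3, Fin.sum_univ_three, smul_eq_mul]; ring]
      ring
    · show dot3 _ b = -(dot3 (s⁻¹ • c) b')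
      rw [expand, hdb, hcb,
        show dot3 (s⁻¹ • c) b' = s⁻¹ * dot3 c b' by
          simp [dot3, Fin.sum_univ_three, smul_eq_mul]; ring]
      ring

end
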